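/- arXiv:1507.02557 — 4 statements merged into one kernel-verified Lean document; each statement's English description precedes it below -/
import Mathlib

section
/- For any polynomial u of degree at most N on [-1,1], u(-1)^2 + u(1)^2 ≤ ((N+1)(N+2)/2) · ∫_{-1}^{1} u(x)^2 dx. -/
open Polynomial MeasureTheory intervalIntegral Finset

noncomputable def QQ (k : ℕ) : Polynomial ℝ := derivative^[k] ((X^2 - 1)^k)

lemma poly_intble (p : Polynomial ℝ) : IntervalIntegrable (fun x => p.eval x) volume (-1) 1 :=
  (p.continuous_aeval).intervalIntegrable _ _

lemma poly_ibp (p q : Polynomial ℝ) :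
    ∫ x in (-1:ℝ)..1, p.eval x * q.derivative.eval x =
      p.eval 1 * q.eval 1 - p.eval (-1) * q.eval (-1)
        - ∫ x in (-1:ℝ)..1, p.derivative.eval x * q.eval x := by
  exact intervalIntegral.integral_mul_deriv_eq_deriv_mul
    (u := fun x => p.eval x) (v := fun x => q.eval x)
    (u' := fun x => p.derivative.eval x) (v' := fun x => q.derivative.eval x)
    (fun x _ => p.hasDerivAt x) (fun x _ => q.hasDerivAt x) (poly_intble _) (poly_intble _)

lemma poly_ftc (p : Polynomial ℝ) :
    ∫ x in (-1:ℝ)..1, p.derivative.eval x = p.eval 1 - p.eval (-1) := by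
  have := intervalIntegral.integral_deriv_eq_sub' (a := (-1:ℝ)) (b := 1)
    (f := fun x => p.eval x) (f' := fun x => p.derivative.eval x)
    (by funext x; exact (p.hasDerivAt x).deriv)
    (fun x _ => (p.hasDerivAt x).differentiableAt)
    ((p.derivative.continuous_aeval).continuousOn)
  simpa using this
lemma rodrigues_factor (k : ℕ) : ∀ j, j ≤ k →
    ∃ c : Polynomial ℝ, derivative^[j] ((X^2 - 1)^k) = (X^2 - 1)^(k - j) * c
      ∧ c.eval 1 = ∏ i ∈ Finset.range j, (2 * ((k : ℝ) - i))
      ∧ c.eval (-1) = ∏ i ∈ Finset.range j, (-2 * ((k : ℝ) - i)) := by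
  intro j
  induction j with
  | zero => exact fun _ => ⟨1, by simp⟩
  | succ j ih =>
    intro hj
    obtain ⟨c, hc, h1, h2⟩ := ih (Nat.le_of_succ_le hj)
    refine ⟨Polynomial.C (2 * ((k : ℝ) - j)) * X * c + (X^2 - 1) * derivative c, ?_, ?_, ?_⟩
    · rw [Function.iterate_succ_apply', hc]
      have hkj : k - j = (k - (j+1)) + 1 := by omega
      have hcast : Polynomial.C (2 * ((k : ℝ) - j))
          = Polynomial.C 2 * (Polynomial.C ((k - (j+1) : ℕ) : ℝ) + 1) := by
        have h1 : ((k - j : ℕ) : ℝ) = (k : ℝ) - j := Nat.cast_sub (by omega)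
        have h2 : (k : ℝ) - j = ((k - (j+1) : ℕ) : ℝ) + 1 := by
          rw [← h1, hkj]; push_cast; ring
        rw [h2, map_mul, map_add, map_one]
      rw [hkj, hcast, Polynomial.derivative_mul, Polynomial.derivative_pow]
      simp only [Polynomial.derivative_sub, Polynomial.derivative_one,
        Polynomial.derivative_X_pow, Nat.add_sub_cancel, map_add, map_mul, map_one,
        Nat.cast_add, Nat.cast_one, Polynomial.C_1, sub_zero]
      ring
    · simp [Polynomial.eval_mul, h1, Finset.prod_range_succ]; ring
    · simp [Polynomial.eval_mul, h2, Finset.prod_range_succ]; ring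

lemma iter_deriv_vanish {k j : ℕ} (hj : j < k) (x : ℝ) (hx : x = 1 ∨ x = -1) :
    (derivative^[j] ((X^2 - 1)^k : Polynomial ℝ)).eval x = 0 := by
  obtain ⟨c, hc, -, -⟩ := rodrigues_factor k j hj.le
  have hkj : k - j ≠ 0 := by omega
  rcases hx with rfl | rfl <;>
    simp [hc, Polynomial.eval_pow, zero_pow hkj]

lemma prod_2k : ∀ k : ℕ, (∏ i ∈ Finset.range k, (2 * ((k : ℝ) - i))) = 2^k * (k.factorial : ℝ) := by
  intro k
  induction k with
  | zero => simp
  | succ k ih =>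
    rw [Finset.prod_range_succ']
    have h : ∀ i ∈ Finset.range k, 2 * (((k+1 : ℕ) : ℝ) - ((i+1 : ℕ) : ℝ)) = 2 * ((k:ℝ) - i) :=
      fun i _ => by push_cast; ring
    rw [Finset.prod_congr rfl h, ih]
    push_cast [Nat.factorial_succ]
    ring

lemma QQ_eval_one (k : ℕ) : (QQ k).eval 1 = 2^k * (k.factorial : ℝ) := by
  obtain ⟨c, hc, h1, -⟩ := rodrigues_factor k k le_rfl
  rw [QQ, hc, Nat.sub_self, pow_zero, one_mul, h1, prod_2k]

lemma QQ_eval_neg_one (k : ℕ) : (QQ k).eval (-1) = (-1)^k * (2^k * (k.factorial : ℝ)) := by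
  obtain ⟨c, hc, -, h2⟩ := rodrigues_factor k k le_rfl
  rw [QQ, hc, Nat.sub_self, pow_zero, one_mul, h2]
  have h : ∀ i ∈ Finset.range k, (-2 * ((k:ℝ) - i)) = (-1) * (2 * ((k:ℝ) - i)) :=
    fun i _ => by ring
  rw [Finset.prod_congr rfl h, Finset.prod_mul_distrib, Finset.prod_const, prod_2k, Finset.card_range]

lemma ibp_shift (k : ℕ) (p : Polynomial ℝ) : ∀ i, i ≤ k →
    (∫ x in (-1:ℝ)..1, p.eval x * (QQ k).eval x)
      = (-1)^i * ∫ x in (-1:ℝ)..1,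
          (derivative^[i] p).eval x * (derivative^[k-i] ((X^2-1)^k : Polynomial ℝ)).eval x := by
  intro i
  induction i with
  | zero => simp [QQ]
  | succ i ih =>
    intro hi
    rw [ih (Nat.le_of_succ_le hi)]
    have hki : k - i = (k - (i+1)) + 1 := by omega
    rw [hki, Function.iterate_succ_apply']
    have hibp := poly_ibp (derivative^[i] p) (derivative^[k-(i+1)] ((X^2-1)^k : Polynomial ℝ))
    rw [hibp, iter_deriv_vanish (by omega) 1 (Or.inl rfl),
      iter_deriv_vanish (by omega) (-1) (Or.inr rfl),
      show derivative^[i+1] p = derivative (derivative^[i] p) from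
        Function.iterate_succ_apply' _ _ _]
    ring

lemma QQ_orth {k : ℕ} (p : Polynomial ℝ) (hp : p.natDegree < k) :
    (∫ x in (-1:ℝ)..1, p.eval x * (QQ k).eval x) = 0 := by
  rw [ibp_shift k p k le_rfl, Polynomial.iterate_derivative_eq_zero hp]
  simp

lemma monic_W (k : ℕ) : (((X:Polynomial ℝ)^2 - 1)^k).Monic := by
  have : ((X:Polynomial ℝ)^2 - 1) = X^2 - Polynomial.C 1 := by simp
  rw [this]
  exact (Polynomial.monic_X_pow_sub_C (1:ℝ) (n := 2) (by norm_num)).pow k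

lemma natDegree_W (k : ℕ) : (((X:Polynomial ℝ)^2 - 1)^k).natDegree = 2*k := by
  have : ((X:Polynomial ℝ)^2 - 1) = X^2 - Polynomial.C 1 := by simp
  rw [this, Polynomial.natDegree_pow, Polynomial.natDegree_X_pow_sub_C, mul_comm]

lemma iter_deriv_W (k : ℕ) :
    derivative^[2*k] (((X:Polynomial ℝ)^2 - 1)^k) = Polynomial.C (((2*k).factorial : ℝ)) := by
  have hd : (derivative^[2*k] (((X:Polynomial ℝ)^2 - 1)^k)).natDegree ≤ 0 := by
    have := Polynomial.natDegree_iterate_derivative (((X:Polynomial ℝ)^2 - 1)^k) (2*k)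
    rw [natDegree_W] at this; omega
  rw [Polynomial.eq_C_of_natDegree_le_zero hd, Polynomial.coeff_iterate_derivative]
  rw [zero_add, Nat.descFactorial_self]
  have hc : (((X:Polynomial ℝ)^2 - 1)^k).coeff (2*k) = 1 := by
    have := (monic_W k).leadingCoeff
    rwa [Polynomial.leadingCoeff, natDegree_W] at this
  rw [hc]
  simp

lemma QQ_norm (k : ℕ) :
    (∫ x in (-1:ℝ)..1, (QQ k).eval x * (QQ k).eval x)
      = ((2*k).factorial : ℝ) * ∫ x in (-1:ℝ)..1, (1 - x^2)^k := by
  rw [ibp_shift k (QQ k) k le_rfl, Nat.sub_self]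
  simp only [Function.iterate_zero_apply]
  have h2k : derivative^[k] (QQ k) = Polynomial.C (((2*k).factorial : ℝ)) := by
    rw [QQ, ← Function.iterate_add_apply, show k + k = 2*k by ring, iter_deriv_W]
  rw [h2k]
  have : ∀ x : ℝ, (Polynomial.C (((2*k).factorial : ℝ))).eval x
        * (((X:Polynomial ℝ)^2 - 1)^k).eval x = ((2*k).factorial : ℝ) * ((-1)^k * (1 - x^2)^k) := by
    intro x
    simp only [Polynomial.eval_mul, Polynomial.eval_pow, Polynomial.eval_C,
      Polynomial.eval_sub, Polynomial.eval_one, Polynomial.eval_X]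
    rw [show (x^2 - 1) = (-1) * (1 - x^2) by ring, mul_pow]
  rw [intervalIntegral.integral_congr (fun x _ => this x)]
  rw [intervalIntegral.integral_const_mul, intervalIntegral.integral_const_mul]
  rcases Nat.even_or_odd k with he | ho
  · rw [he.neg_one_pow]; ring
  · rw [ho.neg_one_pow]
    ring

lemma cont_int (k : ℕ) : IntervalIntegrable (fun x : ℝ => (1-x^2)^k) volume (-1) 1 :=
  (Continuous.pow (by continuity) k).intervalIntegrable _ _

lemma I_rec (k : ℕ) :
    (2*(k:ℝ)+3) * ∫ x in (-1:ℝ)..1, (1-x^2)^(k+1)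
      = (2*(k:ℝ)+2) * ∫ x in (-1:ℝ)..1, (1-x^2)^k := by
  have hderiv : ∀ x ∈ Set.uIcc (-1:ℝ) 1, HasDerivAt (fun x : ℝ => x*(1-x^2)^(k+1))
      ((2*(k:ℝ)+3)*(1-x^2)^(k+1) - (2*(k:ℝ)+2)*(1-x^2)^k) x := by
    intro x _
    have h1 : HasDerivAt (fun x : ℝ => 1 - x^2) (-(2*x)) x := by
      simpa using (hasDerivAt_pow 2 x).const_sub 1
    have h2 := h1.fun_pow (k+1)
    have h3 := (hasDerivAt_id x).fun_mul h2
    refine h3.congr_deriv (Eq.symm ?_)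
    simp only [Nat.add_sub_cancel, id_eq, one_mul]
    rw [pow_succ]
    push_cast
    ring
  have hint : IntervalIntegrable
      (fun x : ℝ => (2*(k:ℝ)+3)*(1-x^2)^(k+1) - (2*(k:ℝ)+2)*(1-x^2)^k) volume (-1) 1 :=
    ((cont_int (k+1)).const_mul _).sub ((cont_int k).const_mul _)
  have := intervalIntegral.integral_eq_sub_of_hasDerivAt hderiv hint
  rw [intervalIntegral.integral_sub ((cont_int (k+1)).const_mul _) ((cont_int k).const_mul _),
    intervalIntegral.integral_const_mul, intervalIntegral.integral_const_mul] at this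
  have hb : (1:ℝ)*(1-(1:ℝ)^2)^(k+1) - (-1)*(1-(-1:ℝ)^2)^(k+1) = 0 := by
    norm_num
  rw [hb] at this
  linarith

lemma I_fact : ∀ k : ℕ, ((2*k+1).factorial : ℝ) * ∫ x in (-1:ℝ)..1, (1-x^2)^k
    = 2^(2*k+1) * ((k.factorial : ℝ))^2 := by
  intro k
  induction k with
  | zero => norm_num
  | succ k ih =>
    have hrec := I_rec k
    have hfac : (((2*(k+1)+1).factorial : ℕ) : ℝ)
        = (2*(k:ℝ)+3) * ((2*(k:ℝ)+2) * ((2*k+1).factorial : ℝ)) := by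
      rw [show 2*(k+1)+1 = (2*k+1)+1+1 by ring, Nat.factorial_succ, Nat.factorial_succ]
      push_cast; ring
    rw [hfac]
    have hpow : (2:ℝ)^(2*(k+1)+1) = 4 * 2^(2*k+1) := by
      rw [show 2*(k+1)+1 = (2*k+1)+2 by ring, pow_add]; ring
    rw [hpow, show (((k+1).factorial : ℕ) : ℝ) = ((k:ℝ)+1) * (k.factorial : ℝ) from by
      rw [Nat.factorial_succ]; push_cast; ring]
    linear_combination ((2*(k:ℝ)+2) * (((2*k+1).factorial : ℕ) : ℝ)) * hrec
      + (2*(k:ℝ)+2)^2 * ih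

lemma QQ_natDegree_le (k : ℕ) : (QQ k).natDegree ≤ k := by
  have := Polynomial.natDegree_iterate_derivative (((X:Polynomial ℝ)^2 - 1)^k) k
  rw [natDegree_W] at this
  rw [QQ]; omega

lemma QQ_coeff_ne (k : ℕ) : (QQ k).coeff k ≠ 0 := by
  rw [QQ, Polynomial.coeff_iterate_derivative]
  have hc : (((X:Polynomial ℝ)^2 - 1)^k).coeff (k+k) = 1 := by
    have := (monic_W k).leadingCoeff
    rwa [Polynomial.leadingCoeff, natDegree_W, show 2*k = k+k by ring] at this
  rw [hc]
  have h0 : (k + k).descFactorial k ≠ 0 := by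
    rw [Ne, Nat.descFactorial_eq_zero_iff_lt]; omega
  simpa using h0

lemma expand : ∀ n : ℕ, ∀ u : Polynomial ℝ, u.natDegree ≤ n →
    ∃ a : ℕ → ℝ, u = ∑ k ∈ Finset.range (n+1), Polynomial.C (a k) * QQ k := by
  intro n
  induction n with
  | zero =>
    intro u hu
    refine ⟨fun _ => u.coeff 0, ?_⟩
    rw [Polynomial.eq_C_of_natDegree_le_zero hu]
    simp [QQ]
  | succ n ih =>
    intro u hu
    set c := u.coeff (n+1) / (QQ (n+1)).coeff (n+1) with hcdef
    have hv : (u - Polynomial.C c * QQ (n+1)).natDegree ≤ n := by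
      apply Polynomial.natDegree_le_iff_coeff_eq_zero.mpr
      intro m hm
      rw [Polynomial.coeff_sub, Polynomial.coeff_C_mul]
      rcases eq_or_lt_of_le (Nat.succ_le_of_lt hm) with he | hl
      · rw [← he, hcdef, div_mul_cancel₀ _ (QQ_coeff_ne (n+1)), sub_self]
      · rw [Polynomial.coeff_eq_zero_of_natDegree_lt (lt_of_le_of_lt hu hl),
          Polynomial.coeff_eq_zero_of_natDegree_lt (lt_of_le_of_lt (QQ_natDegree_le (n+1)) hl)]
        ring
    obtain ⟨a, ha⟩ := ih _ hv
    refine ⟨Function.update a (n+1) c, ?_⟩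
    rw [Finset.sum_range_succ, Function.update_self]
    have : ∑ k ∈ Finset.range (n+1), Polynomial.C (Function.update a (n+1) c k) * QQ k
        = ∑ k ∈ Finset.range (n+1), Polynomial.C (a k) * QQ k := by
      apply Finset.sum_congr rfl
      intro k hk
      rw [Function.update_of_ne (by simp at hk; omega)]
    rw [this, ← ha]
    ring

lemma QQ_orth_pair {j k : ℕ} (h : j ≠ k) :
    (∫ x in (-1:ℝ)..1, (QQ j).eval x * (QQ k).eval x) = 0 := by
  rcases h.lt_or_gt with hl | hl
  · exact QQ_orth (QQ j) (lt_of_le_of_lt (QQ_natDegree_le j) hl)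
  · rw [intervalIntegral.integral_congr
      (fun x _ => mul_comm ((QQ j).eval x) ((QQ k).eval x))]
    exact QQ_orth (QQ k) (lt_of_le_of_lt (QQ_natDegree_le k) hl)

lemma sum_odds (n : ℕ) : ∑ k ∈ Finset.range n, (2*(k:ℝ)+1) = (n:ℝ)^2 := by
  induction n with
  | zero => simp
  | succ n ih => rw [Finset.sum_range_succ, ih]; push_cast; ring

lemma sum_alt (n : ℕ) :
    ∑ k ∈ Finset.range n, (-1:ℝ)^k * (2*(k:ℝ)+1) = -(-1:ℝ)^n * n := by
  induction n with
  | zero => simp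
  | succ n ih => rw [Finset.sum_range_succ, ih, pow_succ]; push_cast; ring

lemma comb (n : ℕ) (b : ℕ → ℝ) :
    (∑ k ∈ Finset.range n, (-1:ℝ)^k * b k)^2 + (∑ k ∈ Finset.range n, b k)^2
      ≤ ((n:ℝ)*((n:ℝ)+1)/2) * ∑ k ∈ Finset.range n, 2/(2*(k:ℝ)+1) * (b k)^2 := by
  have hcsA := Finset.sum_sq_le_sum_mul_sum_of_sq_eq_mul (Finset.range n)
    (r := fun k => if Even k then b k else 0)
    (f := fun k => if Even k then (2*(k:ℝ)+1)/2 else 0)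
    (g := fun k => if Even k then 2/(2*(k:ℝ)+1) * (b k)^2 else 0)
    (fun k _ => by by_cases h : Even k <;> simp [h]; positivity)
    (fun k _ => by by_cases h : Even k <;> simp [h]; positivity)
    (fun k _ => by
      by_cases h : Even k <;> simp [h]
      have h0 : (2*(k:ℝ)+1) ≠ 0 := by positivity
      field_simp)
  have hcsB := Finset.sum_sq_le_sum_mul_sum_of_sq_eq_mul (Finset.range n)
    (r := fun k => if ¬ Even k then b k else 0)
    (f := fun k => if ¬ Even k then (2*(k:ℝ)+1)/2 else 0)
    (g := fun k => if ¬ Even k then 2/(2*(k:ℝ)+1) * (b k)^2 else 0)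
    (fun k _ => by by_cases h : Even k <;> simp [h]; positivity)
    (fun k _ => by by_cases h : Even k <;> simp [h]; positivity)
    (fun k _ => by
      by_cases h : Even k <;> simp [h]
      have h0 : (2*(k:ℝ)+1) ≠ 0 := by positivity
      field_simp)
  set A := ∑ k ∈ Finset.range n, (if Even k then b k else 0) with hAdef
  set B := ∑ k ∈ Finset.range n, (if ¬ Even k then b k else 0) with hBdef
  set SE := ∑ k ∈ Finset.range n, (if Even k then 2/(2*(k:ℝ)+1) * (b k)^2 else 0) with hSEdef
  set SO := ∑ k ∈ Finset.range n, (if ¬ Even k then 2/(2*(k:ℝ)+1) * (b k)^2 else 0) with hSOdef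
  set EA := ∑ k ∈ Finset.range n, (if Even k then (2*(k:ℝ)+1)/2 else 0) with hEAdef
  set EO := ∑ k ∈ Finset.range n, (if ¬ Even k then (2*(k:ℝ)+1)/2 else 0) with hEOdef
  have hA : ∑ k ∈ Finset.range n, b k = A + B := by
    rw [hAdef, hBdef, ← Finset.sum_add_distrib]
    exact Finset.sum_congr rfl fun k _ => by by_cases h : Even k <;> simp [h]
  have hAB : ∑ k ∈ Finset.range n, (-1:ℝ)^k * b k = A - B := by
    rw [hAdef, hBdef, ← Finset.sum_sub_distrib]
    refine Finset.sum_congr rfl fun k _ => ?_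
    rcases Nat.even_or_odd k with h | h
    · rw [h.neg_one_pow, if_pos h, if_neg (by simpa using h)]; ring
    · rw [h.neg_one_pow, if_neg (by simpa using h), if_pos (by simpa using h)]; ring
  have hS : ∑ k ∈ Finset.range n, 2/(2*(k:ℝ)+1) * (b k)^2 = SE + SO := by
    rw [hSEdef, hSOdef, ← Finset.sum_add_distrib]
    exact Finset.sum_congr rfl fun k _ => by by_cases h : Even k <;> simp [h]
  have hSE0 : 0 ≤ SE := Finset.sum_nonneg fun k _ => by
    by_cases h : Even k <;> simp [h]; positivity
  have hSO0 : 0 ≤ SO := Finset.sum_nonneg fun k _ => by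
    by_cases h : Even k <;> simp [h]; positivity
  have hone : (-1:ℝ) ≤ (-1:ℝ)^n ∧ (-1:ℝ)^n ≤ 1 := by
    rcases Nat.even_or_odd n with h | h <;> rw [h.neg_one_pow] <;> norm_num
  have hEA : EA ≤ (n:ℝ)*((n:ℝ)+1)/4 := by
    have heq : EA = ((∑ k ∈ Finset.range n, (2*(k:ℝ)+1))
        + ∑ k ∈ Finset.range n, (-1:ℝ)^k * (2*(k:ℝ)+1))/4 := by
      rw [hEAdef, ← Finset.sum_add_distrib, Finset.sum_div]
      refine Finset.sum_congr rfl fun k _ => ?_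
      rcases Nat.even_or_odd k with h | h
      · rw [if_pos h, h.neg_one_pow]; ring
      · rw [if_neg (by simpa using h), h.neg_one_pow]; ring
    rw [heq, sum_odds, sum_alt]
    nlinarith [hone.1, Nat.cast_nonneg (α := ℝ) n]
  have hEO : EO ≤ (n:ℝ)*((n:ℝ)+1)/4 := by
    have heq : EO = ((∑ k ∈ Finset.range n, (2*(k:ℝ)+1))
        - ∑ k ∈ Finset.range n, (-1:ℝ)^k * (2*(k:ℝ)+1))/4 := by
      rw [hEOdef, ← Finset.sum_sub_distrib, Finset.sum_div]
      refine Finset.sum_congr rfl fun k _ => ?_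
      rcases Nat.even_or_odd k with h | h
      · rw [if_neg (by simpa using h), h.neg_one_pow]; ring
      · rw [if_pos (by simpa using h), h.neg_one_pow]; ring
    rw [heq, sum_odds, sum_alt]
    nlinarith [hone.2, Nat.cast_nonneg (α := ℝ) n]
  rw [hA, hAB, hS]
  have h1 := mul_le_mul_of_nonneg_right hEA hSE0
  have h2 := mul_le_mul_of_nonneg_right hEO hSO0
  nlinarith [hcsA, hcsB, h1, h2]

lemma QQ_cont (k : ℕ) : Continuous (fun x : ℝ => (QQ k).eval x) := by
  exact (QQ k).continuous

set_option maxHeartbeats 1000000 in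
/-- Trace inequality in 1D: for a polynomial of degree at most `N`,
`u(-1)^2 + u(1)^2 ≤ ((N+1)(N+2)/2) ∫_{-1}^1 u^2`. -/
theorem trace_inequality_1d (N : ℕ) (u : Polynomial ℝ) (hu : u.natDegree ≤ N) :
    (u.eval (-1)) ^ 2 + (u.eval 1) ^ 2 ≤
      (((N : ℝ) + 1) * ((N : ℝ) + 2) / 2) * ∫ x in (-1 : ℝ)..1, (u.eval x) ^ 2 := by
  obtain ⟨a, ha⟩ := expand N u hu
  set b : ℕ → ℝ := fun k => a k * (2^k * (k.factorial : ℝ)) with hbdef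
  have heval : ∀ x : ℝ, u.eval x = ∑ k ∈ Finset.range (N+1), a k * (QQ k).eval x := by
    intro x
    rw [ha, Polynomial.eval_finset_sum]
    exact Finset.sum_congr rfl fun k _ => by rw [Polynomial.eval_mul, Polynomial.eval_C]
  -- boundary values
  have he1 : u.eval 1 = ∑ k ∈ Finset.range (N+1), b k := by
    rw [heval]
    exact Finset.sum_congr rfl fun k _ => by rw [QQ_eval_one, hbdef]
  have hem1 : u.eval (-1) = ∑ k ∈ Finset.range (N+1), (-1:ℝ)^k * b k := by
    rw [heval]
    exact Finset.sum_congr rfl fun k _ => by rw [QQ_eval_neg_one, hbdef]; ring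
  -- integral expansion
  have hint : ∀ j k : ℕ, IntervalIntegrable
      (fun x : ℝ => (a j * (QQ j).eval x) * (a k * (QQ k).eval x)) volume (-1) 1 :=
    fun j k => (((continuous_const.mul (QQ_cont j)).mul
      (continuous_const.mul (QQ_cont k)))).intervalIntegrable _ _
  have hsq : ∀ x : ℝ, (u.eval x)^2 = ∑ j ∈ Finset.range (N+1), ∑ k ∈ Finset.range (N+1),
      (a j * (QQ j).eval x) * (a k * (QQ k).eval x) := by
    intro x
    rw [heval, sq, Finset.sum_mul_sum]
  have hI1 : (∫ x in (-1:ℝ)..1, ∑ j ∈ Finset.range (N+1), ∑ k ∈ Finset.range (N+1),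
        (a j * (QQ j).eval x) * (a k * (QQ k).eval x))
      = ∑ j ∈ Finset.range (N+1), ∫ x in (-1:ℝ)..1, ∑ k ∈ Finset.range (N+1),
        (a j * (QQ j).eval x) * (a k * (QQ k).eval x) := by
    refine intervalIntegral.integral_finset_sum ?_
    intro j _
    exact ((continuous_finset_sum _ (fun k _ => (continuous_const.mul (QQ_cont j)).mul
      (continuous_const.mul (QQ_cont k))))).intervalIntegrable _ _
  have hI2 : ∀ j : ℕ, (∫ x in (-1:ℝ)..1, ∑ k ∈ Finset.range (N+1),
        (a j * (QQ j).eval x) * (a k * (QQ k).eval x))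
      = ∑ k ∈ Finset.range (N+1),
        ∫ x in (-1:ℝ)..1, (a j * (QQ j).eval x) * (a k * (QQ k).eval x) :=
    fun j => intervalIntegral.integral_finset_sum (fun k _ => hint j k)
  have hI : (∫ x in (-1:ℝ)..1, (u.eval x)^2)
      = ∑ j ∈ Finset.range (N+1), ∑ k ∈ Finset.range (N+1),
          ∫ x in (-1:ℝ)..1, (a j * (QQ j).eval x) * (a k * (QQ k).eval x) := by
    rw [intervalIntegral.integral_congr (fun x _ => hsq x), hI1]
    exact Finset.sum_congr rfl fun j _ => hI2 j
  -- diagonalize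
  have hdiag : ∀ j ∈ Finset.range (N+1), (∑ k ∈ Finset.range (N+1),
      ∫ x in (-1:ℝ)..1, (a j * (QQ j).eval x) * (a k * (QQ k).eval x))
        = 2/(2*(j:ℝ)+1) * (b j)^2 := by
    intro j hj
    have hterm : ∀ k : ℕ, (∫ x in (-1:ℝ)..1, (a j * (QQ j).eval x) * (a k * (QQ k).eval x))
        = (a j * a k) * ∫ x in (-1:ℝ)..1, (QQ j).eval x * (QQ k).eval x := by
      intro k
      rw [← intervalIntegral.integral_const_mul]
      exact intervalIntegral.integral_congr fun x _ => by ring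
    rw [Finset.sum_eq_single_of_mem j hj (fun k _ hk => by
      rw [hterm k, QQ_orth_pair (Ne.symm hk), mul_zero])]
    rw [hterm j, QQ_norm j]
    have hfact := I_fact j
    have hne : (2*(j:ℝ)+1) ≠ 0 := by positivity
    have hfac2 : (((2*j+1).factorial : ℕ) : ℝ) = (2*(j:ℝ)+1) * ((2*j).factorial : ℝ) := by
      rw [Nat.factorial_succ]; push_cast; ring
    rw [hfac2] at hfact
    have hpow : (2:ℝ)^(2*j+1) = 2 * ((2:ℝ)^j)^2 := by
      rw [pow_succ, ← pow_mul]; ring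
    rw [hpow] at hfact
    rw [hbdef]
    field_simp
    nlinarith [hfact]
  have hsum : (∫ x in (-1:ℝ)..1, (u.eval x)^2)
      = ∑ k ∈ Finset.range (N+1), 2/(2*(k:ℝ)+1) * (b k)^2 := by
    rw [hI]
    exact Finset.sum_congr rfl hdiag
  rw [he1, hem1, hsum]
  have hcomb := comb (N+1) b
  have hcast : (((N+1 : ℕ)):ℝ) * ((((N+1 : ℕ)):ℝ) + 1) / 2 = ((N:ℝ)+1)*((N:ℝ)+2)/2 := by
    push_cast; ring
  rw [hcast] at hcomb
  exact hcomb
end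

section
/- For real square matrices, decompose A = A^s + A^k with A^s = (A + Aᵀ)/2 symmetric and A^k = (A - Aᵀ)/2 skew-symmetric, and let M be symmetric positive definite. Then for every eigenvalue λ of M⁻¹A, λ_min(M⁻¹A^s) ≤ Re(λ) ≤ λ_max(M⁻¹A^s), where λ_min, λ_max denote the extreme (real) eigenvalues of the symmetric generalized eigenproblem A^s v = λ M v. -/
open Matrix

private lemma quad_conj {n : ℕ} (P X : Matrix (Fin n) (Fin n) ℂ) (z : Fin n → ℂ) :
    star (P *ᵥ z) ⬝ᵥ X *ᵥ (P *ᵥ z) = star z ⬝ᵥ (Pᴴ * X * P) *ᵥ z := by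
  simp only [star_mulVec, mulVec_mulVec, dotProduct_mulVec, vecMul_vecMul, mul_assoc]

private lemma star_quad {n : ℕ} (N : Matrix (Fin n) (Fin n) ℂ) (v : Fin n → ℂ) :
    star (star v ⬝ᵥ N *ᵥ v) = star v ⬝ᵥ Nᴴ *ᵥ v := by
  rw [← star_dotProduct_star, star_star, star_mulVec, dotProduct_mulVec]

private lemma conjTranspose_map_real {n : ℕ} (P : Matrix (Fin n) (Fin n) ℝ) :
    (P.map (algebraMap ℝ ℂ))ᴴ = Pᵀ.map (algebraMap ℝ ℂ) := by
  ext i j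
  simp [Matrix.conjTranspose_apply, Matrix.map_apply, Complex.conj_ofReal]

private lemma map_smul_real {n : ℕ} (r : ℝ) (P : Matrix (Fin n) (Fin n) ℝ) :
    (r • P).map (algebraMap ℝ ℂ) = (r : ℂ) • P.map (algebraMap ℝ ℂ) := by
  ext i j
  simp [Matrix.map_apply, Matrix.smul_apply]

private lemma dot_star_self {n : ℕ} (v : Fin n → ℂ) :
    star v ⬝ᵥ v = ((∑ i, Complex.normSq (v i) : ℝ) : ℂ) := by
  rw [Complex.ofReal_sum]
  simp only [dotProduct, Pi.star_apply]
  exact Finset.sum_congr rfl fun i _ => by rw [mul_comm, Complex.star_def, Complex.mul_conj]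

/-- The real part of any eigenvalue of `M⁻¹A` (with `M` symmetric positive
definite) is bounded by the extreme eigenvalues of `M⁻¹A^s`, where
`A^s = (A + Aᵀ)/2` is the symmetric part of `A`. -/
theorem re_spectrum_bounded_by_symmetric_part (n : ℕ)
    (A M : Matrix (Fin n) (Fin n) ℝ) (hM : M.PosDef) :
    ∀ lam ∈ spectrum ℂ ((M⁻¹ * A).map (algebraMap ℝ ℂ)),
      sInf (spectrum ℝ (M⁻¹ * ((1 / 2 : ℝ) • (A + Aᵀ)))) ≤ lam.re ∧
      lam.re ≤ sSup (spectrum ℝ (M⁻¹ * ((1 / 2 : ℝ) • (A + Aᵀ)))) := by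
  intro lam hlam
  set As : Matrix (Fin n) (Fin n) ℝ := (1 / 2 : ℝ) • (A + Aᵀ) with hAsdef
  have hAsSym : Asᵀ = As := by
    simp [hAsdef, transpose_smul, transpose_add, add_comm]
  have hMdet : IsUnit M.det := isUnit_iff_ne_zero.mpr hM.det_pos.ne'
  set S : Matrix (Fin n) (Fin n) ℝ := (open scoped MatrixOrder in CFC.sqrt M) with hSdef
  have hSps : S.PosSemidef := by open scoped MatrixOrder in exact (CFC.sqrt_nonneg M).posSemidef
  have hSS : S * S = M := by open scoped MatrixOrder in exact CFC.sqrt_mul_sqrt_self M hM.posSemidef.nonneg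
  have hSdet : IsUnit S.det := by
    refine isUnit_iff_ne_zero.mpr (fun h0 => hM.det_pos.ne' ?_)
    rw [← hSS, det_mul, h0, mul_zero]
  have hSsym : Sᵀ = S := hSps.1
  set B : Matrix (Fin n) (Fin n) ℝ := S⁻¹ * As * S⁻¹ with hBdef
  have hSinvSym : S⁻¹ᵀ = S⁻¹ := by rw [transpose_nonsing_inv, hSsym]
  have hBsym : Bᵀ = B := by
    simp [hBdef, transpose_mul, hAsSym, hSinvSym, Matrix.mul_assoc]
  have hB : B.IsHermitian := hBsym
  have hSpecEq : spectrum ℝ (M⁻¹ * As) = spectrum ℝ B := by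
    obtain ⟨u, hu⟩ := (Matrix.isUnit_iff_isUnit_det S).mpr hSdet
    have hui : (↑u⁻¹ : Matrix (Fin n) (Fin n) ℝ) = S⁻¹ := by rw [Matrix.coe_units_inv, hu]
    have hcj : M⁻¹ * As = (↑u⁻¹ : Matrix (Fin n) (Fin n) ℝ) * B * (↑u : Matrix (Fin n) (Fin n) ℝ) := by
      rw [hui, hu, hBdef, ← hSS, Matrix.mul_inv_rev]
      simp only [Matrix.mul_assoc]
      rw [Matrix.nonsing_inv_mul S hSdet, Matrix.mul_one]
    rw [hcj, spectrum.units_conjugate']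
  rw [← AlgEquiv.spectrum_eq (Matrix.toLinAlgEquiv' : Matrix (Fin n) (Fin n) ℂ ≃ₐ[ℂ] _)
      ((M⁻¹ * A).map (algebraMap ℝ ℂ)),
    ← Module.End.hasEigenvalue_iff_mem_spectrum] at hlam
  obtain ⟨x, hx⟩ := hlam.exists_hasEigenvector
  have hx0 : x ≠ 0 := hx.right
  have hxe : ((M⁻¹ * A).map (algebraMap ℝ ℂ)) *ᵥ x = lam • x := by
    have h1 := hx.apply_eq_smul
    rwa [Matrix.toLinAlgEquiv'_apply] at h1
  have hMx : (A.map (algebraMap ℝ ℂ)) *ᵥ x = lam • ((M.map (algebraMap ℝ ℂ)) *ᵥ x) := by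
    have h2 := congrArg (fun v => (M.map (algebraMap ℝ ℂ)) *ᵥ v) hxe
    simp only [mulVec_mulVec] at h2
    rw [← Matrix.map_mul, ← Matrix.mul_assoc, Matrix.mul_nonsing_inv M hMdet,
      Matrix.one_mul, mulVec_smul] at h2
    exact h2
  set Sc := S.map (algebraMap ℝ ℂ) with hScdef
  have hScH : Scᴴ = Sc := by rw [hScdef, conjTranspose_map_real, hSsym]
  have hMc : Sc * Sc = M.map (algebraMap ℝ ℂ) := by rw [hScdef, ← Matrix.map_mul, hSS]
  set y := Sc *ᵥ x with hydef
  have hy0 : y ≠ 0 := by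
    intro h0
    apply hx0
    have hxy : (S⁻¹.map (algebraMap ℝ ℂ)) *ᵥ y = x := by
      rw [hydef, mulVec_mulVec, hScdef, ← Matrix.map_mul, Matrix.nonsing_inv_mul S hSdet,
        Matrix.map_one _ (map_zero _) (map_one _), one_mulVec]
    rw [h0, mulVec_zero] at hxy
    exact hxy.symm
  have hc : star x ⬝ᵥ ((M.map (algebraMap ℝ ℂ)) *ᵥ x) = star y ⬝ᵥ y := by
    have h3 := quad_conj Sc 1 x
    rw [one_mulVec, Matrix.mul_one, hScH, hMc, ← hydef] at h3
    exact h3.symm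
  set T : ℝ := ∑ i, Complex.normSq (y i) with hTdef
  have hyy : star y ⬝ᵥ y = (T : ℂ) := by rw [hTdef]; exact dot_star_self y
  have hT0 : 0 < T := by
    obtain ⟨i, hi⟩ : ∃ i, y i ≠ 0 := by
      by_contra h
      push_neg at h
      exact hy0 (funext h)
    rw [hTdef]
    exact Finset.sum_pos' (fun j _ => Complex.normSq_nonneg _)
      ⟨i, Finset.mem_univ i, Complex.normSq_pos.mpr hi⟩
  set q : ℂ := star x ⬝ᵥ ((A.map (algebraMap ℝ ℂ)) *ᵥ x) with hqdef
  have hq : q = lam * (T : ℂ) := by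
    rw [hqdef, hMx, dotProduct_smul, smul_eq_mul, hc, hyy]
  have hstarq : star q = star x ⬝ᵥ ((Aᵀ.map (algebraMap ℝ ℂ)) *ᵥ x) := by
    rw [hqdef, star_quad, conjTranspose_map_real]
  have hAsmap : As.map (algebraMap ℝ ℂ)
      = (1 / 2 : ℂ) • (A.map (algebraMap ℝ ℂ) + Aᵀ.map (algebraMap ℝ ℂ)) := by
    ext i j
    simp [hAsdef, Matrix.map_apply, Matrix.smul_apply, Matrix.add_apply,
      Matrix.transpose_apply]
    ring
  have h2r : (2 : ℂ) * (star x ⬝ᵥ ((As.map (algebraMap ℝ ℂ)) *ᵥ x)) = q + star q := by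
    rw [hAsmap, smul_mulVec, dotProduct_smul, smul_eq_mul, add_mulVec, dotProduct_add,
      ← hqdef, ← hstarq]
    ring
  have hr : star x ⬝ᵥ ((As.map (algebraMap ℝ ℂ)) *ᵥ x) = ((lam.re * T : ℝ) : ℂ) := by
    have h5 : q + star q = ((2 * q.re : ℝ) : ℂ) := by
      rw [Complex.star_def, Complex.add_conj]
    have h6 : q.re = lam.re * T := by
      rw [hq]
      simp [Complex.mul_re]
    have h7 := h2r.trans h5
    rw [h6] at h7
    have h8 : ((2 * (lam.re * T) : ℝ) : ℂ) = (2 : ℂ) * ((lam.re * T : ℝ) : ℂ) := by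
      push_cast; ring
    rw [h8] at h7
    exact mul_left_cancel₀ two_ne_zero h7
  set Bc := B.map (algebraMap ℝ ℂ) with hBcdef
  have hrB : star x ⬝ᵥ ((As.map (algebraMap ℝ ℂ)) *ᵥ x) = star y ⬝ᵥ (Bc *ᵥ y) := by
    have hSBS : S * B * S = As := by
      rw [hBdef]
      simp only [Matrix.mul_assoc]
      rw [Matrix.nonsing_inv_mul S hSdet, Matrix.mul_one, ← Matrix.mul_assoc,
        Matrix.mul_nonsing_inv S hSdet, Matrix.one_mul]
    have h4 := quad_conj Sc Bc x
    have hSBSc : Scᴴ * Bc * Sc = As.map (algebraMap ℝ ℂ) := by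
      rw [hScH, hScdef, hBcdef, ← Matrix.map_mul, ← Matrix.map_mul, hSBS]
    rw [hSBSc, ← hydef] at h4
    exact h4.symm
  set U : Matrix (Fin n) (Fin n) ℝ := (hB.eigenvectorUnitary : Matrix (Fin n) (Fin n) ℝ)
    with hUdef
  set μ : Fin n → ℝ := hB.eigenvalues with hμdef
  have hUst : star U = Uᵀ := rfl
  have hU1 : U * Uᵀ = 1 := by
    rw [← hUst]
    exact (Matrix.mem_unitaryGroup_iff).mp hB.eigenvectorUnitary.2
  have hU2 : Uᵀ * U = 1 := by
    rw [← hUst]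
    exact (Matrix.mem_unitaryGroup_iff').mp hB.eigenvectorUnitary.2
  have hspec : B = U * diagonal μ * Uᵀ := by
    have h := hB.spectral_theorem
    rw [Unitary.conjStarAlgAut_apply, ← hUdef, ← hμdef, hUst] at h
    simpa [RCLike.ofReal_real_eq_id, Function.id_comp] using h
  have hdiag : Uᵀ * B * U = diagonal μ := by
    rw [hspec]
    have h8 : Uᵀ * (U * diagonal μ * Uᵀ) * U = Uᵀ * U * diagonal μ * (Uᵀ * U) := by
      simp only [Matrix.mul_assoc]
    rw [h8, hU2, Matrix.one_mul, Matrix.mul_one]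
  set Uc := U.map (algebraMap ℝ ℂ) with hUcdef
  have hUcH : Ucᴴ = Uᵀ.map (algebraMap ℝ ℂ) := conjTranspose_map_real U
  set z := (Uᵀ.map (algebraMap ℝ ℂ)) *ᵥ y with hzdef
  have hyz : y = Uc *ᵥ z := by
    rw [hzdef, mulVec_mulVec, hUcdef, ← Matrix.map_mul, hU1,
      Matrix.map_one _ (map_zero _) (map_one _), one_mulVec]
  have hUcU : Ucᴴ * Uc = 1 := by
    rw [hUcH, hUcdef, ← Matrix.map_mul, hU2, Matrix.map_one _ (map_zero _) (map_one _)]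
  have hzz : star y ⬝ᵥ y = star z ⬝ᵥ z := by
    have h9 := quad_conj Uc 1 z
    rw [one_mulVec, Matrix.mul_one, hUcU, one_mulVec, ← hyz] at h9
    exact h9
  have hDc : Ucᴴ * Bc * Uc = diagonal (fun i => ((μ i : ℝ) : ℂ)) := by
    rw [hUcH, hUcdef, hBcdef, ← Matrix.map_mul, ← Matrix.map_mul, hdiag,
      diagonal_map (map_zero _)]
    rfl
  have hqB : star y ⬝ᵥ (Bc *ᵥ y) = star z ⬝ᵥ (diagonal (fun i => ((μ i : ℝ) : ℂ)) *ᵥ z) := by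
    have h10 := quad_conj Uc Bc z
    rw [hDc, ← hyz] at h10
    exact h10
  have hdq : star z ⬝ᵥ (diagonal (fun i => ((μ i : ℝ) : ℂ)) *ᵥ z)
      = ((∑ i, μ i * Complex.normSq (z i) : ℝ) : ℂ) := by
    rw [Complex.ofReal_sum]
    simp only [dotProduct, mulVec_diagonal, Pi.star_apply]
    refine Finset.sum_congr rfl fun i _ => ?_
    rw [Complex.star_def]
    push_cast
    rw [← Complex.mul_conj]
    ring
  have hTz : T = ∑ i, Complex.normSq (z i) := by
    have h11 : (T : ℂ) = ((∑ i, Complex.normSq (z i) : ℝ) : ℂ) :=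
      hyy.symm.trans (hzz.trans (dot_star_self z))
    exact_mod_cast h11
  have hmain : lam.re * T = ∑ i, μ i * Complex.normSq (z i) := by
    have h12 := hr.symm.trans (hrB.trans (hqB.trans hdq))
    exact_mod_cast h12
  constructor
  · rw [hSpecEq]
    have hbdd : BddBelow (spectrum ℝ B) := (Matrix.finite_spectrum B).bddBelow
    have hmle : ∀ i, sInf (spectrum ℝ B) ≤ μ i := fun i =>
      csInf_le hbdd (hμdef ▸ hB.eigenvalues_mem_spectrum_real i)
    have hle : sInf (spectrum ℝ B) * T ≤ lam.re * T := by
      calc sInf (spectrum ℝ B) * T = ∑ i, sInf (spectrum ℝ B) * Complex.normSq (z i) := by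
            rw [hTz, Finset.mul_sum]
        _ ≤ ∑ i, μ i * Complex.normSq (z i) :=
            Finset.sum_le_sum fun i _ =>
              mul_le_mul_of_nonneg_right (hmle i) (Complex.normSq_nonneg _)
        _ = lam.re * T := hmain.symm
    exact (mul_le_mul_iff_of_pos_right hT0).mp hle
  · rw [hSpecEq]
    have hbdd : BddAbove (spectrum ℝ B) := (Matrix.finite_spectrum B).bddAbove
    have hmle : ∀ i, μ i ≤ sSup (spectrum ℝ B) := fun i =>
      le_csSup hbdd (hμdef ▸ hB.eigenvalues_mem_spectrum_real i)
    have hle : lam.re * T ≤ sSup (spectrum ℝ B) * T := by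
      calc lam.re * T = ∑ i, μ i * Complex.normSq (z i) := hmain
        _ ≤ ∑ i, sSup (spectrum ℝ B) * Complex.normSq (z i) :=
            Finset.sum_le_sum fun i _ =>
              mul_le_mul_of_nonneg_right (hmle i) (Complex.normSq_nonneg _)
        _ = sSup (spectrum ℝ B) * T := by rw [hTz, Finset.mul_sum]
    exact (mul_le_mul_iff_of_pos_right hT0).mp hle
end

section
/- For a real square matrix A with skew-symmetric part A^k = (A - Aᵀ)/2 and M symmetric positive definite, every eigenvalue λ of M⁻¹A satisfies |Im(λ)| ≤ ρ(M⁻¹A^k), where ρ denotes spectral radius. -/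
open Matrix

namespace ImSpecAux

noncomputable section

open scoped Matrix.Norms.L2Operator

/-- The matrix algebra with the L2 operator norm is a C⋆-algebra. -/
def matCStar (n : ℕ) : CStarAlgebra (Matrix (Fin n) (Fin n) ℂ) :=
  { Matrix.instL2OpNormedRing (n := Fin n) (𝕜 := ℂ),
    Matrix.instL2OpNormedAlgebra (n := Fin n) (𝕜 := ℂ),
    (inferInstance : StarRing (Matrix (Fin n) (Fin n) ℂ)),
    Matrix.instCStarRing (n := Fin n) (𝕜 := ℂ),
    (inferInstance : CompleteSpace (Matrix (Fin n) (Fin n) ℂ)),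
    (inferInstance : StarModule ℂ (Matrix (Fin n) (Fin n) ℂ)) with }

theorem skew_bound {n : ℕ} (G : Matrix (Fin n) (Fin n) ℂ) (hG : Gᴴ = -G)
    (w : Fin n → ℂ) :
    ENNReal.ofReal ‖star w ⬝ᵥ (G *ᵥ w)‖ ≤
      spectralRadius ℂ G * ENNReal.ofReal ‖star w ⬝ᵥ w‖ := by
  letI := matCStar n
  haveI : IsStarNormal G := ⟨by
    rw [Matrix.star_eq_conjTranspose, hG]
    exact (Commute.refl G).neg_left⟩
  have hρ : spectralRadius ℂ G = (‖G‖₊ : ENNReal) :=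
    @IsStarNormal.spectralRadius_eq_nnnorm _ (matCStar n) G this
  rw [hρ]
  set W : EuclideanSpace ℂ (Fin n) := (WithLp.equiv 2 _).symm w with hWdef
  have h1 : star w ⬝ᵥ (G *ᵥ w) =
      inner (𝕜 := ℂ) W ((WithLp.equiv 2 _).symm (G *ᵥ w)) :=
    (dotProduct_comm _ _).trans (EuclideanSpace.inner_toLp_toLp w (G *ᵥ w)).symm
  have h2 : star w ⬝ᵥ w = inner (𝕜 := ℂ) W W :=
    (dotProduct_comm _ _).trans (EuclideanSpace.inner_toLp_toLp w w).symm
  have hWW : inner (𝕜 := ℂ) W W = ((‖W‖ ^ 2 : ℝ) : ℂ) := by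
    rw [inner_self_eq_norm_sq_to_K]
    norm_cast
  have hb : ‖star w ⬝ᵥ (G *ᵥ w)‖ ≤ ‖G‖ * ‖star w ⬝ᵥ w‖ := by
    have hWnorm : ‖star w ⬝ᵥ w‖ = ‖W‖ ^ 2 := by
      rw [h2, hWW]
      simp [sq_abs, abs_of_nonneg (sq_nonneg ‖W‖)]
    rw [h1, hWnorm]
    calc ‖inner (𝕜 := ℂ) W ((WithLp.equiv 2 _).symm (G *ᵥ w))‖
        ≤ ‖W‖ * ‖(WithLp.equiv 2 (Fin n → ℂ)).symm (G *ᵥ w)‖ := norm_inner_le_norm _ _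
      _ ≤ ‖W‖ * (‖G‖ * ‖W‖) := by
          refine mul_le_mul_of_nonneg_left ?_ (norm_nonneg _)
          exact G.l2_opNorm_mulVec W
      _ = ‖G‖ * ‖W‖ ^ 2 := by ring
  calc ENNReal.ofReal ‖star w ⬝ᵥ (G *ᵥ w)‖
      ≤ ENNReal.ofReal (‖G‖ * ‖star w ⬝ᵥ w‖) := ENNReal.ofReal_le_ofReal hb
    _ = (‖G‖₊ : ENNReal) * ENNReal.ofReal ‖star w ⬝ᵥ w‖ := by
        exact (ENNReal.ofReal_mul (norm_nonneg _)).trans (congrArg (· * _) (ENNReal.ofReal_coe_nnreal (p := ‖G‖₊)))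

end

end ImSpecAux

/-- The imaginary part of any eigenvalue of `M⁻¹A` (with `M` symmetric positive
definite) is bounded in modulus by the spectral radius of `M⁻¹A^k`, where
`A^k = (A - Aᵀ)/2` is the skew-symmetric part of `A`. -/
theorem im_spectrum_bounded_by_skew_part (n : ℕ)
    (A M : Matrix (Fin n) (Fin n) ℝ) (hM : M.PosDef) :
    ∀ lam ∈ spectrum ℂ ((M⁻¹ * A).map (algebraMap ℝ ℂ)),
      ENNReal.ofReal |lam.im| ≤
        spectralRadius ℂ ((M⁻¹ * ((1 / 2 : ℝ) • (A - Aᵀ))).map (algebraMap ℝ ℂ)) := by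
  classical
  intro lam hlam
  set c := algebraMap ℝ ℂ with hc
  -- conjTranspose of a mapped real matrix
  have hct : ∀ X : Matrix (Fin n) (Fin n) ℝ, (X.map c)ᴴ = Xᵀ.map c := by
    intro X
    ext i j
    simp [Matrix.conjTranspose_apply, Matrix.map_apply, hc, Complex.conj_ofReal]
  have hmapmul : ∀ X Y : Matrix (Fin n) (Fin n) ℝ,
      (X * Y).map c = X.map c * Y.map c := fun X Y => Matrix.map_mul
  -- the skew part
  set K : Matrix (Fin n) (Fin n) ℝ := (1 / 2 : ℝ) • (A - Aᵀ) with hK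
  have hKskew : Kᵀ = -K := by
    ext i j
    simp [hK, Matrix.transpose_apply, Matrix.smul_apply, Matrix.sub_apply]
    ring
  -- invertibility of M
  have hMdet : IsUnit M.det := isUnit_iff_ne_zero.mpr hM.det_pos.ne'
  have hMinv : M * M⁻¹ = 1 := Matrix.mul_nonsing_inv M hMdet
  -- square root of M
  set R := (open scoped MatrixOrder in CFC.sqrt M) with hRdef
  have hRR : R * R = M := by
    open scoped MatrixOrder in exact CFC.sqrt_mul_sqrt_self M (Matrix.nonneg_iff_posSemidef.mpr hM.posSemidef)
  have hRherm : Rᴴ = R := by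
    open scoped MatrixOrder in exact (Matrix.nonneg_iff_posSemidef.mp (CFC.sqrt_nonneg M)).isHermitian
  have hRsym : Rᵀ = R := by
    ext i j
    have h := congrFun (congrFun hRherm i) j
    simpa [Matrix.conjTranspose_apply] using h
  have hRdet : R.det ≠ 0 := by
    intro h
    have : M.det = 0 := by rw [← hRR, Matrix.det_mul, h, mul_zero]
    exact hM.det_pos.ne' this
  -- complex versions
  set Rc := R.map c with hRc
  set Mc := M.map c with hMc
  set Ac := A.map c with hAc
  set Kc := K.map c with hKc
  have hMcRc : Rc * Rc = Mc := by rw [hRc, hMc, ← hmapmul, hRR]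
  have hRcH : Rcᴴ = Rc := by rw [hRc, hct, hRsym]
  have hRcdet : IsUnit Rc.det := by
    have hdet : Rc.det = c R.det := by
      rw [hRc]
      exact (RingHom.map_det c R).symm
    rw [hdet]
    exact isUnit_iff_ne_zero.mpr (by
      simp only [hc, Complex.coe_algebraMap]
      exact_mod_cast hRdet)
  have hRcunit : IsUnit Rc := (Matrix.isUnit_iff_isUnit_det _).mpr hRcdet
  have hRcinv : Rc * Rc⁻¹ = 1 := Matrix.mul_nonsing_inv _ hRcdet
  have hRcinv' : Rc⁻¹ * Rc = 1 := Matrix.nonsing_inv_mul _ hRcdet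
  have hMcinv : (M⁻¹).map c = Mc⁻¹ := by
    refine (Matrix.inv_eq_right_inv ?_).symm
    rw [hMc, ← hmapmul, hMinv, Matrix.map_one _ (map_zero c) (map_one c)]
  -- eigenvector
  rw [← AlgEquiv.spectrum_eq (Matrix.toLinAlgEquiv' (R := ℂ) (n := Fin n))] at hlam
  obtain ⟨v, hv⟩ :=
    (Module.End.hasEigenvalue_iff_mem_spectrum.mpr hlam).exists_hasEigenvector
  have hv0 : v ≠ 0 := hv.right
  have hveq : ((M⁻¹ * A).map c) *ᵥ v = lam • v := by
    have h := hv.apply_eq_smul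
    rwa [Matrix.toLinAlgEquiv'_apply] at h
  have hAeq : Ac *ᵥ v = lam • (Mc *ᵥ v) := by
    have h1 : Mc *ᵥ (((M⁻¹ * A).map c) *ᵥ v) = Ac *ᵥ v := by
      rw [Matrix.mulVec_mulVec, hMc, hAc, ← hmapmul, ← Matrix.mul_assoc, hMinv, Matrix.one_mul]
    rw [hveq, Matrix.mulVec_smul] at h1
    exact h1.symm
  set w := Rc *ᵥ v with hw
  -- transfer of quadratic forms through Rc
  have hquad : ∀ N : Matrix (Fin n) (Fin n) ℂ,
      star v ⬝ᵥ ((Rc * N * Rc) *ᵥ v) = star w ⬝ᵥ (N *ᵥ w) := by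
    intro N
    rw [hw, Matrix.star_mulVec, hRcH, ← Matrix.dotProduct_mulVec]
    simp only [Matrix.mulVec_mulVec]
    rw [Matrix.mul_assoc]
  -- the conjugated skew matrix
  set G := Rc⁻¹ * Kc * Rc⁻¹ with hG
  have hKcG : Rc * G * Rc = Kc := by
    rw [hG]
    calc Rc * (Rc⁻¹ * Kc * Rc⁻¹) * Rc
        = (Rc * Rc⁻¹) * Kc * (Rc⁻¹ * Rc) := by noncomm_ring
      _ = Kc := by rw [hRcinv, hRcinv', one_mul, mul_one]
  have hKcH : Kcᴴ = -Kc := by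
    rw [hKc, hct, hKskew]
    ext i j
    simp [Matrix.map_apply]
  have hRcinvH : (Rc⁻¹)ᴴ = Rc⁻¹ := by
    rw [Matrix.conjTranspose_nonsing_inv, hRcH]
  have hGskew : Gᴴ = -G := by
    rw [hG, Matrix.conjTranspose_mul, Matrix.conjTranspose_mul, hRcinvH, hKcH]
    simp [Matrix.mul_assoc]
  -- spectrum equality
  have hspec : spectrum ℂ ((M⁻¹ * K).map c) = spectrum ℂ G := by
    have hmap : (M⁻¹ * K).map c = Mc⁻¹ * Kc := by rw [hmapmul, hMcinv, hKc]
    have hMcinv2 : Mc⁻¹ = Rc⁻¹ * Rc⁻¹ := by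
      rw [← hMcRc, Matrix.mul_inv_rev]
    have hconj : (hRcunit.unit : Matrix (Fin n) (Fin n) ℂ) * (Mc⁻¹ * Kc) *
        ((hRcunit.unit⁻¹ : (Matrix (Fin n) (Fin n) ℂ)ˣ) : Matrix (Fin n) (Fin n) ℂ) = G := by
      rw [Matrix.coe_units_inv, IsUnit.unit_spec, hMcinv2, hG]
      calc Rc * (Rc⁻¹ * Rc⁻¹ * Kc) * Rc⁻¹
          = (Rc * Rc⁻¹) * (Rc⁻¹ * Kc * Rc⁻¹) := by noncomm_ring
        _ = Rc⁻¹ * Kc * Rc⁻¹ := by rw [hRcinv, one_mul]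
    rw [hmap, ← hconj, spectrum.units_conjugate]
  have hsrad : spectralRadius ℂ ((M⁻¹ * K).map c) = spectralRadius ℂ G := by
    unfold spectralRadius
    rw [hspec]
  -- quadratic form identities
  have hqM : star v ⬝ᵥ (Mc *ᵥ v) = star w ⬝ᵥ w := by
    have h := hquad 1
    rwa [Matrix.mul_one, hMcRc, Matrix.one_mulVec] at h
  have hqK : star v ⬝ᵥ (Kc *ᵥ v) = star w ⬝ᵥ (G *ᵥ w) := by
    rw [← hKcG]; exact hquad G
  -- the symmetric part has a real quadratic form
  set S := A - K with hS
  have hSsym : Sᵀ = S := by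
    ext i j
    simp [hS, hK, Matrix.transpose_apply, Matrix.sub_apply, Matrix.smul_apply]
    ring
  have hScH : (S.map c)ᴴ = S.map c := by rw [hct, hSsym]
  have hstarform : ∀ N : Matrix (Fin n) (Fin n) ℂ,
      star (star v ⬝ᵥ (N *ᵥ v)) = star v ⬝ᵥ (Nᴴ *ᵥ v) := by
    intro N
    rw [Matrix.star_dotProduct, star_star, Matrix.star_mulVec, ← Matrix.dotProduct_mulVec]
  have hqS_real : (star v ⬝ᵥ (S.map c *ᵥ v)).im = 0 := by
    have h := hstarform (S.map c)
    rw [hScH] at h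
    have := Complex.conj_eq_iff_im.mp h
    exact this
  -- Euclidean norm of w
  set W : EuclideanSpace ℂ (Fin n) := (WithLp.equiv 2 _).symm w with hWdef
  have hqMval : star w ⬝ᵥ w = ((‖W‖ ^ 2 : ℝ) : ℂ) := by
    have h2 : star w ⬝ᵥ w = inner (𝕜 := ℂ) W W :=
      (dotProduct_comm _ _).trans (EuclideanSpace.inner_toLp_toLp w w).symm
    rw [h2, inner_self_eq_norm_sq_to_K]
    norm_cast
  have hw0 : w ≠ 0 := by
    intro h
    apply hv0
    have h1 : Rc⁻¹ *ᵥ w = v := by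
      rw [hw, Matrix.mulVec_mulVec, hRcinv', Matrix.one_mulVec]
    rw [h, Matrix.mulVec_zero] at h1
    exact h1.symm
  have hW0 : 0 < ‖W‖ := by
    rw [norm_pos_iff]
    intro h
    apply hw0
    have : w = WithLp.equiv 2 (Fin n → ℂ) W := rfl
    rw [this, h]
    rfl
  have hWsq : (0 : ℝ) < ‖W‖ ^ 2 := by positivity
  -- imaginary part identity
  have him : lam.im * ‖W‖ ^ 2 = (star w ⬝ᵥ (G *ᵥ w)).im := by
    have hsplit : Ac = S.map c + Kc := by
      rw [hS, hKc, hAc]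
      ext i j
      simp [Matrix.map_apply, Matrix.add_apply, Matrix.sub_apply, map_sub]
    have hlhs : star v ⬝ᵥ (Ac *ᵥ v) = lam * (star v ⬝ᵥ (Mc *ᵥ v)) := by
      rw [hAeq, dotProduct_smul]
      simp [smul_eq_mul]
    rw [hsplit, Matrix.add_mulVec, dotProduct_add, hqM, hqMval] at hlhs
    have h := congrArg Complex.im hlhs
    simp only [Complex.add_im, Complex.mul_im, Complex.ofReal_re, Complex.ofReal_im,
      mul_zero, add_zero, hqS_real, zero_add] at h
    rw [← hqK]
    linarith [h]
  -- final estimate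
  have haux := ImSpecAux.skew_bound G hGskew w
  rw [hsrad]
  have hnqM : ‖star w ⬝ᵥ w‖ = ‖W‖ ^ 2 := by
    rw [hqMval]
    simp [abs_of_nonneg (sq_nonneg ‖W‖)]
  have key : |lam.im| * ‖W‖ ^ 2 ≤ ‖star w ⬝ᵥ (G *ᵥ w)‖ := by
    have h1 : |lam.im| * ‖W‖ ^ 2 = |lam.im * ‖W‖ ^ 2| := by
      rw [abs_mul, abs_of_nonneg (sq_nonneg ‖W‖)]
    rw [h1, him]
    exact Complex.abs_im_le_norm _
  have hchain : ENNReal.ofReal |lam.im| * ENNReal.ofReal (‖W‖ ^ 2) ≤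
      spectralRadius ℂ G * ENNReal.ofReal (‖W‖ ^ 2) := by
    rw [← ENNReal.ofReal_mul (abs_nonneg _)]
    calc ENNReal.ofReal (|lam.im| * ‖W‖ ^ 2)
        ≤ ENNReal.ofReal ‖star w ⬝ᵥ (G *ᵥ w)‖ := ENNReal.ofReal_le_ofReal key
      _ ≤ spectralRadius ℂ G * ENNReal.ofReal ‖star w ⬝ᵥ w‖ := haux
      _ = spectralRadius ℂ G * ENNReal.ofReal (‖W‖ ^ 2) := by rw [hnqM]
  have hne0 : ENNReal.ofReal (‖W‖ ^ 2) ≠ 0 := by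
    simp [ENNReal.ofReal_eq_zero, not_le, hWsq, norm_pos_iff.mp hW0]
  have hnetop : ENNReal.ofReal (‖W‖ ^ 2) ≠ ⊤ := ENNReal.ofReal_ne_top
  exact (ENNReal.mul_le_mul_iff_left hne0 hnetop).mp hchain
end

section
/- Let M be symmetric positive definite and Z real skew-symmetric. Then the spectral radius of M⁻¹Z equals max over nonzero f,g of 2 gᵀ Z f / (fᵀMf + gᵀMg). -/
open Matrix Complex
open scoped ENNReal NNReal

variable {n : ℕ}

/-- isometry fact for matrices with `Wᴴ * W = 1`. -/
lemma aux_isometry (W : Matrix (Fin n) (Fin n) ℂ) (hW : Wᴴ * W = 1) (w : Fin n → ℂ) :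
    star (W *ᵥ w) ⬝ᵥ (W *ᵥ w) = star w ⬝ᵥ w := by
  rw [star_mulVec, dotProduct_mulVec, vecMul_vecMul, hW, vecMul_one]

lemma aux_dp_nonneg (v : Fin n → ℝ) : 0 ≤ v ⬝ᵥ v :=
  Finset.sum_nonneg fun i _ => mul_self_nonneg _

lemma aux_dp_pos {v : Fin n → ℝ} (hv : v ≠ 0) : 0 < v ⬝ᵥ v :=
  lt_of_le_of_ne (aux_dp_nonneg v) (fun h => hv (dotProduct_self_eq_zero.mp h.symm))

lemma aux_key (hn : 0 < n) (B : Matrix (Fin n) (Fin n) ℝ) (hB : Bᵀ = -B) :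
    ∃ c : ℝ, 0 ≤ c ∧
      (∀ u v : Fin n → ℝ, 2 * (v ⬝ᵥ B *ᵥ u) ≤ c * (u ⬝ᵥ u + v ⬝ᵥ v)) ∧
      (∃ u v : Fin n → ℝ, (u ≠ 0 ∨ v ≠ 0) ∧
        2 * (v ⬝ᵥ B *ᵥ u) = c * (u ⬝ᵥ u + v ⬝ᵥ v)) ∧
      spectralRadius ℂ (B.map (algebraMap ℝ ℂ)) = ENNReal.ofReal c := by
  haveI : NeZero n := ⟨hn.ne'⟩
  set φ : ℝ →+* ℂ := (algebraMap ℝ ℂ) with hφ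
  set Bc : Matrix (Fin n) (Fin n) ℂ := B.map φ with hBcdef
  have hBcstar : Bcᴴ = -Bc := by
    ext i j
    have h1 : B j i = -B i j := by simpa using congrFun (congrFun hB i) j
    simp [hBcdef, Matrix.conjTranspose_apply, Matrix.map_apply, hφ, h1,
      Complex.coe_algebraMap, Complex.conj_ofReal]
  set H : Matrix (Fin n) (Fin n) ℂ := (-Complex.I) • Bc with hHdef
  have hH : H.IsHermitian := by
    unfold H
    rw [Matrix.IsHermitian, Matrix.conjTranspose_smul, hBcstar]
    simp
  have hBcH : Bc = Complex.I • H := by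
    unfold H
    rw [smul_smul]
    simp
  set ν : Fin n → ℝ := hH.eigenvalues with hν
  have hne : (Finset.univ : Finset (Fin n)).Nonempty := Finset.univ_nonempty
  set c : ℝ := Finset.univ.sup' hne (fun i => |ν i|) with hc
  obtain ⟨i₀, -, hi₀⟩ := Finset.exists_mem_eq_sup' hne (fun i => |ν i|)
  have hci : c = |ν i₀| := hc.trans hi₀
  have hc0 : 0 ≤ c := hci ▸ abs_nonneg _
  have hcge : ∀ i, |ν i| ≤ c := fun i => by
    rw [hc]; exact Finset.le_sup' (fun i => |ν i|) (Finset.mem_univ i)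
  have key2 : ∀ u v : Fin n → ℝ, 2 * (v ⬝ᵥ B *ᵥ u) ≤ c * (u ⬝ᵥ u + v ⬝ᵥ v) := by
    intro u v
    set uc : Fin n → ℂ := fun j => (u j : ℂ) with huc
    set vc : Fin n → ℂ := fun j => (v j : ℂ) with hvc
    set U : Matrix (Fin n) (Fin n) ℂ := ↑(hH.eigenvectorUnitary) with hUdef
    have hU1 : Uᴴ * U = 1 := by
      rw [← Matrix.star_eq_conjTranspose]
      exact Matrix.mem_unitaryGroup_iff'.mp (hH.eigenvectorUnitary).2
    have hU2 : U * Uᴴ = 1 := by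
      rw [← Matrix.star_eq_conjTranspose]
      exact Matrix.mem_unitaryGroup_iff.mp (hH.eigenvectorUnitary).2
    set y : Fin n → ℂ := vc ᵥ* U with hydef
    set z : Fin n → ℂ := (star U) *ᵥ uc with hzdef
    have hA : vc ⬝ᵥ (Bc *ᵥ uc) = ((v ⬝ᵥ B *ᵥ u : ℝ) : ℂ) := by
      simp only [dotProduct, mulVec, hBcdef, Matrix.map_apply, hφ, Complex.coe_algebraMap,
        huc, hvc]
      push_cast
      rfl
    have hB1 : vc ⬝ᵥ (Bc *ᵥ uc) = Complex.I * (vc ⬝ᵥ (H *ᵥ uc)) := by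
      rw [hBcH, smul_mulVec, dotProduct_smul, smul_eq_mul]
    have hB2 : vc ⬝ᵥ (H *ᵥ uc) = ∑ k, y k * ((ν k : ℂ) * z k) := by
      conv_lhs => rw [hH.spectral_theorem, Unitary.conjStarAlgAut_apply]
      rw [← Matrix.mulVec_mulVec, ← Matrix.mulVec_mulVec, dotProduct_mulVec]
      simp only [dotProduct, Matrix.mulVec_diagonal, ← hydef, ← hzdef]
      rfl
    -- norms of y and z
    have hnormsum : ∀ w : Fin n → ℂ, star w ⬝ᵥ w = ((∑ k, ‖w k‖ ^ 2 : ℝ) : ℂ) := by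
      intro w
      simp only [dotProduct, Pi.star_apply]
      push_cast
      refine Finset.sum_congr rfl fun k _ => ?_
      rw [RCLike.star_def, mul_comm, Complex.mul_conj, Complex.normSq_eq_norm_sq]
      push_cast
      ring
    have hy2 : ∑ k, ‖y k‖ ^ 2 = v ⬝ᵥ v := by
      have hWy : (Uᵀ)ᴴ * Uᵀ = 1 := by
        have h1 : (Uᵀ)ᴴ = (Uᴴ)ᵀ := by ext i j; rfl
        rw [h1, ← Matrix.transpose_mul, hU2, Matrix.transpose_one]
      have h2 : y = Uᵀ *ᵥ vc := by rw [Matrix.mulVec_transpose]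
      have h3 := aux_isometry (Uᵀ) hWy vc
      rw [← h2] at h3
      have h4 : star vc ⬝ᵥ vc = ((v ⬝ᵥ v : ℝ) : ℂ) := by
        simp only [dotProduct, Pi.star_apply, hvc, RCLike.star_def, Complex.conj_ofReal]
        push_cast
        rfl
      have := (hnormsum y).symm.trans (h3.trans h4)
      exact_mod_cast this
    have hz2 : ∑ k, ‖z k‖ ^ 2 = u ⬝ᵥ u := by
      have hWz : ((star U : Matrix (Fin n) (Fin n) ℂ))ᴴ * (star U) = 1 := by
        rw [Matrix.star_eq_conjTranspose, Matrix.conjTranspose_conjTranspose, hU2]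
      have h3 := aux_isometry (star U) hWz uc
      have h4 : star uc ⬝ᵥ uc = ((u ⬝ᵥ u : ℝ) : ℂ) := by
        simp only [dotProduct, Pi.star_apply, huc, RCLike.star_def, Complex.conj_ofReal]
        push_cast
        rfl
      have := (hnormsum z).symm.trans (h3.trans h4)
      exact_mod_cast this
    have habs : |v ⬝ᵥ B *ᵥ u| ≤ c * ∑ k, ‖y k‖ * ‖z k‖ := by
      have e1 : |v ⬝ᵥ B *ᵥ u| = ‖vc ⬝ᵥ (Bc *ᵥ uc)‖ := by
        rw [hA, Complex.norm_real, Real.norm_eq_abs]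
      rw [e1, hB1, hB2, norm_mul, Complex.norm_I, one_mul]
      calc ‖∑ k, y k * ((ν k : ℂ) * z k)‖
          ≤ ∑ k, ‖y k * ((ν k : ℂ) * z k)‖ := by
            exact norm_sum_le _ _
        _ = ∑ k, ‖y k‖ * (|ν k| * ‖z k‖) := by
            refine Finset.sum_congr rfl fun k _ => ?_
            rw [norm_mul, norm_mul, Complex.norm_real, Real.norm_eq_abs]
        _ ≤ ∑ k, ‖y k‖ * (c * ‖z k‖) := by
            refine Finset.sum_le_sum fun k _ => ?_
            exact mul_le_mul_of_nonneg_left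
              (mul_le_mul_of_nonneg_right (hcge k) (norm_nonneg (z k)))
              (norm_nonneg (y k))
        _ = c * ∑ k, ‖y k‖ * ‖z k‖ := by
            rw [Finset.mul_sum]
            refine Finset.sum_congr rfl fun k _ => by ring
    have hcs : (∑ k, ‖y k‖ * ‖z k‖) ≤
        Real.sqrt (v ⬝ᵥ v) * Real.sqrt (u ⬝ᵥ u) := by
      have h2 := Finset.sum_mul_sq_le_sq_mul_sq Finset.univ
        (fun k => ‖y k‖) (fun k => ‖z k‖)
      rw [hy2, hz2] at h2
      have h3 : (0:ℝ) ≤ ∑ k, ‖y k‖ * ‖z k‖ :=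
        Finset.sum_nonneg fun k _ =>
          mul_nonneg (norm_nonneg _) (norm_nonneg _)
      calc (∑ k, ‖y k‖ * ‖z k‖)
          = Real.sqrt ((∑ k, ‖y k‖ * ‖z k‖) ^ 2) := by
            rw [Real.sqrt_sq h3]
        _ ≤ Real.sqrt ((v ⬝ᵥ v) * (u ⬝ᵥ u)) := Real.sqrt_le_sqrt h2
        _ = Real.sqrt (v ⬝ᵥ v) * Real.sqrt (u ⬝ᵥ u) :=
            Real.sqrt_mul (aux_dp_nonneg v) _
    have hfinal : 2 * Real.sqrt (v ⬝ᵥ v) * Real.sqrt (u ⬝ᵥ u) ≤ u ⬝ᵥ u + v ⬝ᵥ v := by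
      have h1 := Real.sq_sqrt (aux_dp_nonneg u)
      have h2 := Real.sq_sqrt (aux_dp_nonneg v)
      nlinarith [sq_nonneg (Real.sqrt (u ⬝ᵥ u) - Real.sqrt (v ⬝ᵥ v))]
    have hb : v ⬝ᵥ B *ᵥ u ≤ |v ⬝ᵥ B *ᵥ u| := le_abs_self _
    have hchain : |v ⬝ᵥ B *ᵥ u| ≤ c * (Real.sqrt (v ⬝ᵥ v) * Real.sqrt (u ⬝ᵥ u)) :=
      habs.trans (by
        have h3 : (0:ℝ) ≤ c := hc0
        exact mul_le_mul_of_nonneg_left hcs h3)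
    nlinarith [Real.sqrt_nonneg (u ⬝ᵥ u), Real.sqrt_nonneg (v ⬝ᵥ v)]
  have key3 : ∃ u v : Fin n → ℝ, (u ≠ 0 ∨ v ≠ 0) ∧
      2 * (v ⬝ᵥ B *ᵥ u) = c * (u ⬝ᵥ u + v ⬝ᵥ v) := by
    by_cases hczero : c = 0
    · refine ⟨fun _ => 1, 0, Or.inl ?_, ?_⟩
      · intro h
        have := congrFun h ⟨0, hn⟩
        simp at this
      · simp [hczero, zero_dotProduct]
    · have hν0 : ν i₀ ≠ 0 := fun h => hczero (by rw [hci, h, abs_zero])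
      set x : Fin n → ℂ := ⇑(hH.eigenvectorBasis i₀) with hxdef
      have hx : H *ᵥ x = ((ν i₀ : ℂ)) • x := by
        rw [hH.mulVec_eigenvectorBasis i₀]
        funext j
        simp only [Pi.smul_apply, Complex.real_smul, smul_eq_mul]
        rfl
      have hxne : x ≠ 0 := by
        intro h
        exact ((hH.eigenvectorBasis).orthonormal.ne_zero i₀) (by ext j; exact congrFun h j)
      have hBx : Bc *ᵥ x = (Complex.I * (ν i₀ : ℂ)) • x := by
        rw [hBcH, smul_mulVec, hx, smul_smul]
      set a : Fin n → ℝ := fun j => (x j).re with hadef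
      set b : Fin n → ℝ := fun j => (x j).im with hbdef
      have hre : ∀ j, (B *ᵥ a) j = -(ν i₀ * b j) ∧ (B *ᵥ b) j = ν i₀ * a j := by
        intro j
        have hj := congrFun hBx j
        have hL : (Bc *ᵥ x) j = ∑ k, (B j k : ℂ) * x k := by
          simp [mulVec, dotProduct, hBcdef, Matrix.map_apply, hφ, Complex.coe_algebraMap]
        have hR : ((Complex.I * (ν i₀ : ℂ)) • x) j = Complex.I * ((ν i₀ : ℂ) * x j) := by
          simp [mul_assoc]
        rw [hL, hR] at hj
        constructor
        · have := congrArg Complex.re hj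
          simpa [Complex.re_sum, Complex.re_ofReal_mul, mulVec, dotProduct,
            Complex.mul_re, Complex.im_ofReal_mul] using this
        · have := congrArg Complex.im hj
          simpa [Complex.im_sum, Complex.im_ofReal_mul, mulVec, dotProduct,
            Complex.mul_im, Complex.re_ofReal_mul] using this
      have hBa : B *ᵥ a = fun j => -(ν i₀ * b j) := funext fun j => (hre j).1
      have hBb : B *ᵥ b = fun j => ν i₀ * a j := funext fun j => (hre j).2
      have hab : a ⬝ᵥ a = b ⬝ᵥ b := by
        have h1 : a ⬝ᵥ (B *ᵥ b) = ν i₀ * (a ⬝ᵥ a) := by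
          rw [hBb]
          simp [dotProduct, Finset.mul_sum]
          exact Finset.sum_congr rfl fun k _ => by ring
        have h2 : a ⬝ᵥ (B *ᵥ b) = ν i₀ * (b ⬝ᵥ b) := by
          rw [dotProduct_mulVec, ← Matrix.mulVec_transpose, hB]
          have : (-B) *ᵥ a = fun j => ν i₀ * b j := by
            rw [Matrix.neg_mulVec, hBa]
            funext j; simp
          rw [this]
          simp [dotProduct, Finset.mul_sum]
          exact Finset.sum_congr rfl fun k _ => by ring
        exact mul_left_cancel₀ hν0 (h1.symm.trans h2)
      have hbne : b ≠ 0 := by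
        intro h0
        have hbb : b ⬝ᵥ b = 0 := by rw [h0]; simp
        have haa : a = 0 := dotProduct_self_eq_zero.mp (hab.trans hbb)
        apply hxne
        funext j
        have h1 : a j = 0 := congrFun haa j
        have h2 : b j = 0 := congrFun h0 j
        have : x j = Complex.mk (a j) (b j) := rfl
        rw [this, h1, h2]
        rfl
      have h5 : B *ᵥ a = (-(ν i₀)) • b := by
        rw [hBa]; funext j; simp only [Pi.smul_apply, smul_eq_mul]; ring
      rcases lt_or_gt_of_ne hν0 with hlt | hgt
      · -- ν i₀ < 0, c = -ν i₀, use u := a, v := b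
        have hcν : c = -ν i₀ := by rw [hci, abs_of_neg hlt]
        refine ⟨a, b, Or.inr hbne, ?_⟩
        rw [hcν, hab, h5, dotProduct_smul, smul_eq_mul]
        ring
      · -- ν i₀ > 0, c = ν i₀, use u := a, v := -b
        have hcν : c = ν i₀ := by rw [hci, abs_of_pos hgt]
        refine ⟨a, -b, Or.inr (neg_ne_zero.mpr hbne), ?_⟩
        rw [hcν, hab, h5, dotProduct_smul, smul_eq_mul, neg_dotProduct, dotProduct_neg,
          neg_dotProduct]
        ring
  refine ⟨c, hc0, key2, key3, ?_⟩
  · -- spectral radius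
    have hspecH : spectrum ℂ H = Set.range (fun i => (ν i : ℂ)) := by
      rw [hH.spectrum_eq_image_range, ← Set.range_comp]
      rfl
    have hspecB : spectrum ℂ Bc = Set.range (fun i => Complex.I * (ν i : ℂ)) := by
      rw [hBcH]
      rw [show (Complex.I • H) = (Units.mk0 Complex.I Complex.I_ne_zero : ℂˣ) • H from rfl]
      rw [spectrum.unit_smul_eq_smul, hspecH]
      ext z
      simp only [Set.mem_smul_set, Set.mem_range, Units.smul_def, Units.val_mk0,
        smul_eq_mul]
      constructor
      · rintro ⟨y, ⟨i, rfl⟩, rfl⟩; exact ⟨i, rfl⟩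
      · rintro ⟨i, rfl⟩; exact ⟨_, ⟨i, rfl⟩, rfl⟩
    have hnorm : ∀ i, (‖(Complex.I * (ν i : ℂ))‖₊ : ℝ≥0∞) = ENNReal.ofReal |ν i| := by
      intro i
      rw [show ((‖(Complex.I * (ν i : ℂ))‖₊ : ℝ≥0∞)) = ENNReal.ofReal ‖Complex.I * (ν i : ℂ)‖ from
        (ofReal_norm _).symm]
      congr 1
      simp [Real.norm_eq_abs]
    rw [spectralRadius]
    apply le_antisymm
    · refine iSup₂_le fun k hk => ?_
      rw [hspecB] at hk
      obtain ⟨i, rfl⟩ := hk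
      rw [hnorm i]
      exact ENNReal.ofReal_le_ofReal (hcge i)
    · have hmem : Complex.I * (ν i₀ : ℂ) ∈ spectrum ℂ Bc := by
        rw [hspecB]; exact ⟨i₀, rfl⟩
      calc ENNReal.ofReal c = (‖(Complex.I * (ν i₀ : ℂ))‖₊ : ℝ≥0∞) := by
            rw [hnorm i₀, hci]
        _ ≤ _ := le_iSup₂ (f := fun k (_ : k ∈ spectrum ℂ Bc) => (‖k‖₊ : ℝ≥0∞)) _ hmem

/-- For `M` symmetric positive definite and `Z` real skew-symmetric, the
spectral radius of `M⁻¹Z` equals `max_{(f,g) ≠ 0} 2 gᵀ Z f / (fᵀMf + gᵀMg)`. -/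
theorem spectralRadius_skew_characterization (n : ℕ) (hn : 0 < n)
    (M Z : Matrix (Fin n) (Fin n) ℝ) (hM : M.PosDef) (hZ : Zᵀ = -Z) :
    ∃ c : ℝ,
      IsGreatest
        {x : ℝ | ∃ f g : Fin n → ℝ, (f ≠ 0 ∨ g ≠ 0) ∧
          x = 2 * (g ⬝ᵥ (Z *ᵥ f)) / (f ⬝ᵥ (M *ᵥ f) + g ⬝ᵥ (M *ᵥ g))} c ∧
      spectralRadius ℂ ((M⁻¹ * Z).map (algebraMap ℝ ℂ)) = ENNReal.ofReal c := by
  set S : Matrix (Fin n) (Fin n) ℝ := (open scoped MatrixOrder in CFC.sqrt M) with hSdef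
  have hSher : S.IsHermitian := open scoped MatrixOrder in (CFC.sqrt_nonneg M).posSemidef.isHermitian
  have hST : Sᵀ = S := hSher.eq
  have hSS : S * S = M := open scoped MatrixOrder in CFC.sqrt_mul_sqrt_self M hM.posSemidef.nonneg
  have hdet : IsUnit S.det := by
    have hdM : IsUnit M.det := isUnit_iff_ne_zero.mpr (ne_of_gt hM.det_pos)
    rw [← hSS, Matrix.det_mul] at hdM
    exact isUnit_of_mul_isUnit_left hdM
  set B : Matrix (Fin n) (Fin n) ℝ := S⁻¹ * Z * S⁻¹ with hBdef
  have hBskew : Bᵀ = -B := by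
    rw [hBdef]
    rw [Matrix.transpose_mul, Matrix.transpose_mul, Matrix.transpose_nonsing_inv, hST, hZ]
    simp [Matrix.mul_assoc, Matrix.neg_mul, Matrix.mul_neg]
  obtain ⟨c, hc0, key2, key3, hrad⟩ := aux_key hn B hBskew
  -- transfer identities
  have hScan : ∀ w : Fin n → ℝ, S⁻¹ *ᵥ (S *ᵥ w) = w := by
    intro w
    rw [Matrix.mulVec_mulVec, Matrix.nonsing_inv_mul _ hdet, Matrix.one_mulVec]
  have hScan' : ∀ w : Fin n → ℝ, S *ᵥ (S⁻¹ *ᵥ w) = w := by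
    intro w
    rw [Matrix.mulVec_mulVec, Matrix.mul_nonsing_inv _ hdet, Matrix.one_mulVec]
  have hquad : ∀ w : Fin n → ℝ, w ⬝ᵥ (M *ᵥ w) = (S *ᵥ w) ⬝ᵥ (S *ᵥ w) := by
    intro w
    rw [← hSS, ← Matrix.mulVec_mulVec, dotProduct_mulVec, ← Matrix.mulVec_transpose, hST]
  have hcross : ∀ w w' : Fin n → ℝ, (S *ᵥ w') ⬝ᵥ (B *ᵥ (S *ᵥ w)) = w' ⬝ᵥ (Z *ᵥ w) := by
    intro w w'
    have h1 : B * S = S⁻¹ * Z := by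
      rw [hBdef]
      exact Matrix.nonsing_inv_mul_cancel_right _ _ hdet
    rw [Matrix.mulVec_mulVec, h1, ← Matrix.mulVec_mulVec, dotProduct_mulVec,
      ← Matrix.mulVec_transpose, Matrix.transpose_nonsing_inv, hST, hScan]
  have hdenpos : ∀ f g : Fin n → ℝ, (f ≠ 0 ∨ g ≠ 0) →
      0 < f ⬝ᵥ (M *ᵥ f) + g ⬝ᵥ (M *ᵥ g) := by
    intro f g hfg
    have hf' : ∀ w : Fin n → ℝ, w ≠ 0 → 0 < w ⬝ᵥ (M *ᵥ w) := by
      intro w hw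
      rw [hquad]
      refine aux_dp_pos fun h => hw ?_
      rw [← hScan w, h, Matrix.mulVec_zero]
    rcases hfg with hf | hg
    · have := aux_dp_nonneg (S *ᵥ g)
      rw [← hquad] at this
      linarith [hf' f hf]
    · have := aux_dp_nonneg (S *ᵥ f)
      rw [← hquad] at this
      linarith [hf' g hg]
  refine ⟨c, ⟨?_, ?_⟩, ?_⟩
  · -- membership
    obtain ⟨u, v, huv, heq⟩ := key3
    refine ⟨S⁻¹ *ᵥ u, S⁻¹ *ᵥ v, ?_, ?_⟩
    · rcases huv with hu | hv
      · refine Or.inl fun h => hu ?_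
        rw [← hScan' u, h, Matrix.mulVec_zero]
      · refine Or.inr fun h => hv ?_
        rw [← hScan' v, h, Matrix.mulVec_zero]
    · have hnum : (S⁻¹ *ᵥ v) ⬝ᵥ (Z *ᵥ (S⁻¹ *ᵥ u)) = v ⬝ᵥ (B *ᵥ u) := by
        rw [← hcross (S⁻¹ *ᵥ u) (S⁻¹ *ᵥ v), hScan' u, hScan' v]
      have hd1 : (S⁻¹ *ᵥ u) ⬝ᵥ (M *ᵥ (S⁻¹ *ᵥ u)) = u ⬝ᵥ u := by
        rw [hquad, hScan' u]
      have hd2 : (S⁻¹ *ᵥ v) ⬝ᵥ (M *ᵥ (S⁻¹ *ᵥ v)) = v ⬝ᵥ v := by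
        rw [hquad, hScan' v]
      rw [hnum, hd1, hd2]
      have hden : 0 < u ⬝ᵥ u + v ⬝ᵥ v := by
        rcases huv with hu | hv
        · have := aux_dp_nonneg v; linarith [aux_dp_pos hu]
        · have := aux_dp_nonneg u; linarith [aux_dp_pos hv]
      rw [eq_div_iff (ne_of_gt hden)]
      exact heq.symm
  · -- upper bound
    rintro x ⟨f, g, hfg, rfl⟩
    have hden := hdenpos f g hfg
    rw [div_le_iff₀ hden]
    have hnum : g ⬝ᵥ (Z *ᵥ f) = (S *ᵥ g) ⬝ᵥ (B *ᵥ (S *ᵥ f)) := (hcross f g).symm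
    rw [hnum, hquad f, hquad g]
    exact key2 (S *ᵥ f) (S *ᵥ g)
  · -- spectral radius
    set ψ : ℝ →+* ℂ := algebraMap ℝ ℂ with hψ
    have hdc : (S.map ⇑ψ).det = ψ S.det := by
      rw [show S.map ⇑ψ = ψ.mapMatrix S from rfl, ← RingHom.map_det]
    have hdetc : IsUnit (S.map ⇑ψ).det := by
      rw [hdc]
      exact isUnit_iff_ne_zero.mpr fun h =>
        (isUnit_iff_ne_zero.mp hdet) ((map_eq_zero ψ).mp h)
    have hinvmap : (S.map ⇑ψ)⁻¹ = (S⁻¹).map ψ := by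
      apply Matrix.inv_eq_left_inv
      rw [← Matrix.map_mul, Matrix.nonsing_inv_mul _ hdet,
        Matrix.map_one _ (map_zero ψ) (map_one ψ)]
    have hsim : (M⁻¹ * Z).map ψ = (S.map ψ)⁻¹ * (B.map ψ) * (S.map ψ) := by
      have h1 : M⁻¹ * Z = S⁻¹ * B * S := by
        have h2 : B * S = S⁻¹ * Z := by
          rw [hBdef]
          exact Matrix.nonsing_inv_mul_cancel_right _ _ hdet
        rw [Matrix.mul_assoc, h2, ← Matrix.mul_assoc, ← Matrix.mul_inv_rev, hSS]
      rw [h1, Matrix.map_mul, Matrix.map_mul, ← hinvmap]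
    have hu : IsUnit (S.map ⇑ψ) := (Matrix.isUnit_iff_isUnit_det _).mpr hdetc
    obtain ⟨us, hus⟩ := hu
    have hspec : spectrum ℂ ((M⁻¹ * Z).map ψ) = spectrum ℂ (B.map ψ) := by
      rw [hsim]
      have h3 : (S.map ⇑ψ)⁻¹ = (↑us⁻¹ : Matrix (Fin n) (Fin n) ℂ) := by
        apply Matrix.inv_eq_left_inv
        rw [← hus]
        exact us.inv_mul
      rw [h3, ← hus, spectrum.units_conjugate']
    rw [spectralRadius, hspec, ← spectralRadius]
    exact hrad
end
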